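/- Let A be a commutative Hopf ℂ-algebra, J a Hopf 2-cocycle for A, B ⊆ A a Hopf subalgebra, and z ∈ A an element such that Δ(z) − z ⊗ 1 − 1 ⊗ z ∈ B⁺ ⊗ B⁺ (where B⁺ = B ∩ ker ε) and A = B[z] is a polynomial ring in z over B. Then: (1) B is closed under the twisted multiplication ·_J, i.e. B is a subalgebra of A_J; (2) A_J is generated as a ℂ-algebra by B ∪ {z}; (3) for every b ∈ B, the commutator z ·_J b − b ·_J z lies in B; consequently δ(b) := z ·_J b − b ·_J z is a derivation of the subalgebra B_J and A_J is the Ore extension B_J[z; δ]. -/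

import Mathlib

open TensorProduct

noncomputable section

namespace Twisting

/-- Convolution product of linear functionals on a coalgebra. -/
def conv {C : Type*} [AddCommMonoid C] [Module ℂ C] [CoalgebraStruct ℂ C]
    (F G : C →ₗ[ℂ] ℂ) : C →ₗ[ℂ] ℂ :=
  LinearMap.mul' ℂ ℂ ∘ₗ TensorProduct.map F G ∘ₗ Coalgebra.comul

variable (A : Type*) [CommRing A] [HopfAlgebra ℂ A]

/-- A Hopf 2-cocycle for the Hopf algebra `A`:  a convolution-invertible linear functional
`J` on `A ⊗ A` satisfying the 2-cocycle identity
`Σ J(a₁b₁ ⊗ c) J(a₂ ⊗ b₂) = Σ J(a ⊗ b₁c₁) J(b₂ ⊗ c₂)` (expressed below as an equality of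
linear functionals on `(A ⊗ A) ⊗ A`) and the normalization `J(a ⊗ 1) = ε(a) = J(1 ⊗ a)`. -/
structure Hopf2Cocycle where
  J : A ⊗[ℂ] A →ₗ[ℂ] ℂ
  Jinv : A ⊗[ℂ] A →ₗ[ℂ] ℂ
  conv_right_inv : conv J Jinv = Coalgebra.counit
  conv_left_inv : conv Jinv J = Coalgebra.counit
  cocycle : conv (J ∘ₗ TensorProduct.map (LinearMap.mul' ℂ A) LinearMap.id)
        (LinearMap.mul' ℂ ℂ ∘ₗ TensorProduct.map J Coalgebra.counit)
      = conv (J ∘ₗ TensorProduct.map LinearMap.id (LinearMap.mul' ℂ A)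
            ∘ₗ (TensorProduct.assoc ℂ A A A).toLinearMap)
        (LinearMap.mul' ℂ ℂ ∘ₗ TensorProduct.map Coalgebra.counit J
            ∘ₗ (TensorProduct.assoc ℂ A A A).toLinearMap)
  norm_right : ∀ a : A, J (a ⊗ₜ[ℂ] 1) = Coalgebra.counit a
  norm_left : ∀ a : A, J ((1 : A) ⊗ₜ[ℂ] a) = Coalgebra.counit a

variable {A}

namespace Hopf2Cocycle

/-- The cotriangular form `R^J (a ⊗ b) = Σ J⁻¹(b₁ ⊗ a₁) J(a₂ ⊗ b₂)`. -/
def RJ (c : Hopf2Cocycle A) : A ⊗[ℂ] A →ₗ[ℂ] ℂ :=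
  conv (c.Jinv ∘ₗ (TensorProduct.comm ℂ A A).toLinearMap) c.J

/-- `J` is minimal if `R^J` is nondegenerate. -/
def Minimal (c : Hopf2Cocycle A) : Prop :=
  ∀ a : A, (∀ b : A, c.RJ (a ⊗ₜ[ℂ] b) = 0) → a = 0

/-- The multiplication `a ·_J b = Σ a₁b₁ J(a₂ ⊗ b₂)` of the twisted algebra `A_J`. -/
def mulJ (c : Hopf2Cocycle A) : A ⊗[ℂ] A →ₗ[ℂ] A :=
  (TensorProduct.rid ℂ A).toLinearMap
    ∘ₗ TensorProduct.map (LinearMap.mul' ℂ A) c.J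
    ∘ₗ Coalgebra.comul

end Hopf2Cocycle

/-- Gauge equivalence of Hopf 2-cocycles, at the level of the underlying bilinear forms:
`J'(a ⊗ b) = Σ x(a₁) x(b₁) J(a₂ ⊗ b₂) x⁻¹(a₃b₃)` for some convolution-invertible
linear functional `x` with `x(1) = 1`. -/
def GaugeEquiv (J J' : A ⊗[ℂ] A →ₗ[ℂ] ℂ) : Prop :=
  ∃ x xinv : A →ₗ[ℂ] ℂ,
    conv x xinv = Coalgebra.counit ∧ conv xinv x = Coalgebra.counit ∧
    x 1 = 1 ∧
    J' = conv (LinearMap.mul' ℂ ℂ ∘ₗ TensorProduct.map x x)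
           (conv J (xinv ∘ₗ LinearMap.mul' ℂ A))

/-- A realization of the twisted algebra `A_J` as an honest (possibly noncommutative)
`ℂ`-algebra `B`: a linear isomorphism matching the twisted multiplication `·_J` with the
multiplication of `B` and preserving units. -/
structure TwistedModel (c : Hopf2Cocycle A) (B : Type*) [Ring B] [Algebra ℂ B] where
  e : A ≃ₗ[ℂ] B
  map_one : e 1 = 1
  map_mul : ∀ a b : A, e (c.mulJ (a ⊗ₜ[ℂ] b)) = e a * e b


/-- The `·_J`-powers `z, z ·_J z, …` of an element `z` in the twisted algebra `A_J`. -/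
def Hopf2Cocycle.zpowJ {A : Type*} [CommRing A] [HopfAlgebra ℂ A]
    (c : Hopf2Cocycle A) (z : A) : ℕ → A
  | 0 => 1
  | n + 1 => c.mulJ (z ⊗ₜ[ℂ] c.zpowJ z n)

/-! ### Auxiliary machinery -/

section Aux
open Coalgebra

variable {A : Type*} [CommRing A] [HopfAlgebra ℂ A]

open Coalgebra

/-- counit collapse, left version -/
lemma repr_counit_smul_left {a : A} {ι : Type*} (r : Coalgebra.Repr ℂ a ι) :
    ∑ i ∈ r.index, Coalgebra.counit (R := ℂ) (r.right i) • r.left i = a := by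
  have h := Coalgebra.sum_tmul_counit_eq (R := ℂ) r
  have h2 := congrArg (TensorProduct.rid ℂ A) h
  simp only [map_sum, TensorProduct.rid_tmul, one_smul] at h2
  exact h2

lemma repr_counit_smul_right {a : A} {ι : Type*} (r : Coalgebra.Repr ℂ a ι) :
    ∑ i ∈ r.index, Coalgebra.counit (R := ℂ) (r.left i) • r.right i = a := by
  have h := Coalgebra.sum_counit_tmul_eq (R := ℂ) r
  have h2 := congrArg (TensorProduct.lid ℂ A) h
  simp only [map_sum, TensorProduct.lid_tmul, one_smul] at h2
  exact h2

/-- A representation of a product, from representations of the factors. -/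
def reprMul {x y : A} {ι κ : Type*} (rx : Coalgebra.Repr ℂ x ι) (ry : Coalgebra.Repr ℂ y κ) :
    Coalgebra.Repr ℂ (x * y) (ι × κ) where
  index := rx.index ×ˢ ry.index
  left := fun p => rx.left p.1 * ry.left p.2
  right := fun p => rx.right p.1 * ry.right p.2
  eq := by
    rw [Finset.sum_product]
    rw [Bialgebra.comul_mul, ← rx.eq, ← ry.eq, Finset.sum_mul_sum]
    refine Finset.sum_congr rfl fun i _ => Finset.sum_congr rfl fun j _ => ?_
    rw [Algebra.TensorProduct.tmul_mul_tmul]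

variable (c : Hopf2Cocycle A)

/-- The bilinear version of `mulJ`, applied to comultiplications. -/
def Phi : (A ⊗[ℂ] A) ⊗[ℂ] (A ⊗[ℂ] A) →ₗ[ℂ] A :=
  (TensorProduct.rid ℂ A).toLinearMap
    ∘ₗ TensorProduct.map (LinearMap.mul' ℂ A) c.J
    ∘ₗ (TensorProduct.tensorTensorTensorComm ℂ A A A A).toLinearMap

lemma Phi_tmul (u u' v v' : A) :
    Phi c ((u ⊗ₜ[ℂ] u') ⊗ₜ[ℂ] (v ⊗ₜ[ℂ] v')) = c.J (u' ⊗ₜ[ℂ] v') • (u * v) := by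
  simp [Phi, TensorProduct.tensorTensorTensorComm_tmul, TensorProduct.rid_tmul]

lemma mulJ_tmul (x y : A) :
    c.mulJ (x ⊗ₜ[ℂ] y) = Phi c ((comul (R := ℂ) x) ⊗ₜ[ℂ] (comul (R := ℂ) y)) := by
  simp only [Hopf2Cocycle.mulJ, Phi, LinearMap.comp_apply,
    TensorProduct.comul_tmul, AlgebraTensorModule.tensorTensorTensorComm_eq, TensorProduct.map_tmul,
    LinearEquiv.coe_coe]

/-- generic: a linear map applied to a product of sums of pure tensors -/
lemma map_sum_tmul_sum {M N P : Type*} [AddCommMonoid M] [AddCommMonoid N] [AddCommMonoid P]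
    [Module ℂ M] [Module ℂ N] [Module ℂ P]
    (G : M ⊗[ℂ] N →ₗ[ℂ] P) {ι κ : Type*} (s : Finset ι) (t : Finset κ)
    (f : ι → M) (g : κ → N) :
    G ((∑ i ∈ s, f i) ⊗ₜ[ℂ] (∑ j ∈ t, g j)) = ∑ i ∈ s, ∑ j ∈ t, G (f i ⊗ₜ[ℂ] g j) := by
  rw [TensorProduct.sum_tmul, map_sum]
  refine Finset.sum_congr rfl fun i _ => ?_
  rw [TensorProduct.tmul_sum, map_sum]

/-- `mulJ` in Sweedler-sum form -/
lemma mulJ_repr (x y : A) {ι κ : Type*} (rx : Coalgebra.Repr ℂ x ι) (ry : Coalgebra.Repr ℂ y κ) :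
    c.mulJ (x ⊗ₜ[ℂ] y) = ∑ i ∈ rx.index, ∑ j ∈ ry.index,
      c.J (rx.right i ⊗ₜ[ℂ] ry.right j) • (rx.left i * ry.left j) := by
  rw [mulJ_tmul, ← rx.eq, ← ry.eq, map_sum_tmul_sum]
  exact Finset.sum_congr rfl fun i _ => Finset.sum_congr rfl fun j _ => Phi_tmul ..

lemma mulJ_one_left (a : A) : c.mulJ ((1 : A) ⊗ₜ[ℂ] a) = a := by
  rw [mulJ_repr c 1 a ⟨{0}, fun _ => (1:A), fun _ => (1:A), by
    simp [Bialgebra.comul_one, Algebra.TensorProduct.one_def]⟩ (ℛ ℂ a)]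
  simp only [Finset.sum_singleton, c.norm_left, one_mul]
  exact repr_counit_smul_left _

lemma mulJ_one_right (a : A) : c.mulJ (a ⊗ₜ[ℂ] (1 : A)) = a := by
  rw [mulJ_repr c a 1 (ℛ ℂ a) ⟨{0}, fun _ => (1:A), fun _ => (1:A), by
    simp [Bialgebra.comul_one, Algebra.TensorProduct.one_def]⟩]
  simp only [Finset.sum_singleton, c.norm_right, mul_one]
  exact repr_counit_smul_left _

end Aux
section Aux2
open Coalgebra TensorProduct

variable {A : Type*} [CommRing A] [HopfAlgebra ℂ A] (c : Hopf2Cocycle A)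

/-- `Psi c T Y = Phi c ((1 ⊗ₜ Y) ⊗ₜ T)` as a linear map in `Y`. -/
def Psi (T : A ⊗[ℂ] A) : A →ₗ[ℂ] A :=
  Phi c ∘ₗ ((TensorProduct.mk ℂ (A ⊗[ℂ] A) (A ⊗[ℂ] A)).flip T) ∘ₗ ((TensorProduct.mk ℂ A A) 1)

lemma Psi_apply (T : A ⊗[ℂ] A) (Y : A) :
    Psi c T Y = Phi c (((1 : A) ⊗ₜ[ℂ] Y) ⊗ₜ[ℂ] T) := rfl

lemma Psi_repr {w : A} {ι : Type*} (rw : Coalgebra.Repr ℂ w ι) (Y : A) :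
    Psi c (comul (R := ℂ) w) Y
      = ∑ m ∈ rw.index, c.J (Y ⊗ₜ[ℂ] rw.right m) • rw.left m := by
  rw [Psi_apply, ← rw.eq, TensorProduct.tmul_sum, map_sum]
  exact Finset.sum_congr rfl fun m _ => by rw [Phi_tmul, one_mul]

lemma Phi_comul_left {a : A} {ι : Type*} (ra : Coalgebra.Repr ℂ a ι) (Z Y : A) :
    Phi c (comul (R := ℂ) a ⊗ₜ[ℂ] (Z ⊗ₜ[ℂ] Y))
      = ∑ i ∈ ra.index, c.J (ra.right i ⊗ₜ[ℂ] Y) • (ra.left i * Z) := by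
  rw [← ra.eq, TensorProduct.sum_tmul, map_sum]
  exact Finset.sum_congr rfl fun i _ => Phi_tmul ..

/-- Gadget for the left-hand associativity computation. -/
def GadL (T : A ⊗[ℂ] A) :
    (A ⊗[ℂ] (A ⊗[ℂ] A)) ⊗[ℂ] (A ⊗[ℂ] (A ⊗[ℂ] A)) →ₗ[ℂ] A :=
  LinearMap.mul' ℂ A
    ∘ₗ TensorProduct.map (LinearMap.mul' ℂ A)
        ((TensorProduct.rid ℂ A).toLinearMap
          ∘ₗ TensorProduct.map ((Psi c T) ∘ₗ LinearMap.mul' ℂ A) c.J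
          ∘ₗ (TensorProduct.tensorTensorTensorComm ℂ A A A A).toLinearMap)
    ∘ₗ (TensorProduct.tensorTensorTensorComm ℂ A (A ⊗[ℂ] A) A (A ⊗[ℂ] A)).toLinearMap

lemma GadL_tmul (T : A ⊗[ℂ] A) (p q s p' q' s' : A) :
    GadL c T ((p ⊗ₜ[ℂ] (q ⊗ₜ[ℂ] s)) ⊗ₜ[ℂ] (p' ⊗ₜ[ℂ] (q' ⊗ₜ[ℂ] s')))
      = c.J (s ⊗ₜ[ℂ] s') • (p * p' * Psi c T (q * q')) := by
  simp [GadL, TensorProduct.tensorTensorTensorComm_tmul, TensorProduct.rid_tmul,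
    mul_smul_comm]

/-- Gadget for the right-hand associativity computation. -/
def GadR (S : A ⊗[ℂ] A) :
    (A ⊗[ℂ] (A ⊗[ℂ] A)) ⊗[ℂ] (A ⊗[ℂ] (A ⊗[ℂ] A)) →ₗ[ℂ] A :=
  Phi c
    ∘ₗ ((TensorProduct.mk ℂ (A ⊗[ℂ] A) (A ⊗[ℂ] A)) S)
    ∘ₗ (TensorProduct.rid ℂ (A ⊗[ℂ] A)).toLinearMap
    ∘ₗ (TensorProduct.assoc ℂ A A ℂ).symm.toLinearMap
    ∘ₗ TensorProduct.map (LinearMap.mul' ℂ A)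
        (TensorProduct.map (LinearMap.mul' ℂ A) c.J
          ∘ₗ (TensorProduct.tensorTensorTensorComm ℂ A A A A).toLinearMap)
    ∘ₗ (TensorProduct.tensorTensorTensorComm ℂ A (A ⊗[ℂ] A) A (A ⊗[ℂ] A)).toLinearMap

lemma GadR_tmul (S : A ⊗[ℂ] A) (p q s p' q' s' : A) :
    GadR c S ((p ⊗ₜ[ℂ] (q ⊗ₜ[ℂ] s)) ⊗ₜ[ℂ] (p' ⊗ₜ[ℂ] (q' ⊗ₜ[ℂ] s')))
      = c.J (s ⊗ₜ[ℂ] s') • Phi c (S ⊗ₜ[ℂ] ((p * p') ⊗ₜ[ℂ] (q * q'))) := by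
  simp only [GadR, LinearMap.comp_apply, LinearEquiv.coe_coe,
    TensorProduct.tensorTensorTensorComm_tmul, TensorProduct.map_tmul,
    LinearMap.mul'_apply, TensorProduct.assoc_symm_tmul, TensorProduct.rid_tmul,
    TensorProduct.mk_apply]
  rw [TensorProduct.tmul_smul, map_smul]

/-- Sweedler coassociativity for four-fold sums against an arbitrary linear gadget. -/
lemma sum4_coassoc (G : (A ⊗[ℂ] (A ⊗[ℂ] A)) ⊗[ℂ] (A ⊗[ℂ] (A ⊗[ℂ] A)) →ₗ[ℂ] A)
    {x y : A} {ι κ ι₁ ι₂ κ₁ κ₂ : Type*} (rx : Coalgebra.Repr ℂ x ι) (ry : Coalgebra.Repr ℂ y κ)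
    (rx1 : (i : ι) → Coalgebra.Repr ℂ (rx.left i) ι₁)
    (rx2 : (i : ι) → Coalgebra.Repr ℂ (rx.right i) ι₂)
    (ry1 : (j : κ) → Coalgebra.Repr ℂ (ry.left j) κ₁)
    (ry2 : (j : κ) → Coalgebra.Repr ℂ (ry.right j) κ₂) :
    ∑ i ∈ rx.index, ∑ j ∈ ry.index, ∑ k ∈ (rx1 i).index, ∑ l ∈ (ry1 j).index,
      G (((rx1 i).left k ⊗ₜ[ℂ] ((rx1 i).right k ⊗ₜ[ℂ] rx.right i)) ⊗ₜ[ℂ]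
         ((ry1 j).left l ⊗ₜ[ℂ] ((ry1 j).right l ⊗ₜ[ℂ] ry.right j)))
  = ∑ i ∈ rx.index, ∑ j ∈ ry.index, ∑ k ∈ (rx2 i).index, ∑ l ∈ (ry2 j).index,
      G ((rx.left i ⊗ₜ[ℂ] ((rx2 i).left k ⊗ₜ[ℂ] (rx2 i).right k)) ⊗ₜ[ℂ]
         (ry.left j ⊗ₜ[ℂ] ((ry2 j).left l ⊗ₜ[ℂ] (ry2 j).right l))) := by
  have hx := Coalgebra.sum_tmul_tmul_eq (R := ℂ) rx rx1 rx2
  have hy := Coalgebra.sum_tmul_tmul_eq (R := ℂ) ry ry1 ry2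
  have key : ∀ (u : (i : ι) → A ⊗[ℂ] (A ⊗[ℂ] A)) (v : (j : κ) → A ⊗[ℂ] (A ⊗[ℂ] A)),
      ∑ i ∈ rx.index, ∑ j ∈ ry.index, G (u i ⊗ₜ[ℂ] v j)
        = G ((∑ i ∈ rx.index, u i) ⊗ₜ[ℂ] (∑ j ∈ ry.index, v j)) := fun u v =>
    (map_sum_tmul_sum G _ _ _ _).symm
  calc ∑ i ∈ rx.index, ∑ j ∈ ry.index, ∑ k ∈ (rx1 i).index, ∑ l ∈ (ry1 j).index,
      G (((rx1 i).left k ⊗ₜ[ℂ] ((rx1 i).right k ⊗ₜ[ℂ] rx.right i)) ⊗ₜ[ℂ]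
         ((ry1 j).left l ⊗ₜ[ℂ] ((ry1 j).right l ⊗ₜ[ℂ] ry.right j)))
      = ∑ i ∈ rx.index, ∑ j ∈ ry.index,
          G ((∑ k ∈ (rx1 i).index, (rx1 i).left k ⊗ₜ[ℂ] ((rx1 i).right k ⊗ₜ[ℂ] rx.right i))
            ⊗ₜ[ℂ] (∑ l ∈ (ry1 j).index,
              (ry1 j).left l ⊗ₜ[ℂ] ((ry1 j).right l ⊗ₜ[ℂ] ry.right j))) := by
        exact Finset.sum_congr rfl fun i _ => Finset.sum_congr rfl fun j _ =>
          (map_sum_tmul_sum G _ _ _ _).symm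
    _ = G ((∑ i ∈ rx.index, ∑ k ∈ (rx1 i).index,
            (rx1 i).left k ⊗ₜ[ℂ] ((rx1 i).right k ⊗ₜ[ℂ] rx.right i)) ⊗ₜ[ℂ]
           (∑ j ∈ ry.index, ∑ l ∈ (ry1 j).index,
            (ry1 j).left l ⊗ₜ[ℂ] ((ry1 j).right l ⊗ₜ[ℂ] ry.right j))) := (key _ _).symm ▸ rfl
    _ = G ((∑ i ∈ rx.index, ∑ k ∈ (rx2 i).index,
            rx.left i ⊗ₜ[ℂ] ((rx2 i).left k ⊗ₜ[ℂ] (rx2 i).right k)) ⊗ₜ[ℂ]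
           (∑ j ∈ ry.index, ∑ l ∈ (ry2 j).index,
            ry.left j ⊗ₜ[ℂ] ((ry2 j).left l ⊗ₜ[ℂ] (ry2 j).right l))) := by rw [hx, hy]
    _ = _ := by
        rw [map_sum_tmul_sum]
        exact Finset.sum_congr rfl fun i _ => Finset.sum_congr rfl fun j _ =>
          map_sum_tmul_sum G _ _ _ _

end Aux2
section Aux3
open Coalgebra TensorProduct

variable {A : Type*} [CommRing A] [HopfAlgebra ℂ A] (c : Hopf2Cocycle A)

lemma comul_tmul_reps (p q : A) {ι κ : Type*} (rp : Coalgebra.Repr ℂ p ι) (rq : Coalgebra.Repr ℂ q κ) :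
    comul (R := ℂ) (p ⊗ₜ[ℂ] q)
      = ∑ k ∈ rp.index, ∑ l ∈ rq.index,
          (rp.left k ⊗ₜ[ℂ] rq.left l) ⊗ₜ[ℂ] (rp.right k ⊗ₜ[ℂ] rq.right l) := by
  rw [TensorProduct.comul_tmul, AlgebraTensorModule.tensorTensorTensorComm_eq,
    ← rp.eq, ← rq.eq, ← LinearEquiv.coe_coe, map_sum_tmul_sum]
  exact Finset.sum_congr rfl fun k _ => Finset.sum_congr rfl fun l _ =>
    TensorProduct.tensorTensorTensorComm_tmul ..

lemma conv_apply_reps (F G : (A ⊗[ℂ] A) ⊗[ℂ] A →ₗ[ℂ] ℂ) (p q r : A)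
    {ι κ μ : Type*} (rp : Coalgebra.Repr ℂ p ι) (rq : Coalgebra.Repr ℂ q κ) (rr : Coalgebra.Repr ℂ r μ) :
    conv F G ((p ⊗ₜ[ℂ] q) ⊗ₜ[ℂ] r)
      = ∑ k ∈ rp.index, ∑ l ∈ rq.index, ∑ t ∈ rr.index,
          F ((rp.left k ⊗ₜ[ℂ] rq.left l) ⊗ₜ[ℂ] rr.left t)
            * G ((rp.right k ⊗ₜ[ℂ] rq.right l) ⊗ₜ[ℂ] rr.right t) := by
  have h2 : comul (R := ℂ) ((p ⊗ₜ[ℂ] q) ⊗ₜ[ℂ] r)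
      = ∑ k ∈ rp.index, ∑ l ∈ rq.index, ∑ t ∈ rr.index,
          ((rp.left k ⊗ₜ[ℂ] rq.left l) ⊗ₜ[ℂ] rr.left t) ⊗ₜ[ℂ]
          ((rp.right k ⊗ₜ[ℂ] rq.right l) ⊗ₜ[ℂ] rr.right t) := by
    rw [TensorProduct.comul_tmul, AlgebraTensorModule.tensorTensorTensorComm_eq,
      comul_tmul_reps _ _ rp rq, ← rr.eq, ← LinearEquiv.coe_coe]
    rw [map_sum_tmul_sum (f := fun k => ∑ l ∈ rq.index,
        (rp.left k ⊗ₜ[ℂ] rq.left l) ⊗ₜ[ℂ] (rp.right k ⊗ₜ[ℂ] rq.right l))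
      (g := fun t => rr.left t ⊗ₜ[ℂ] rr.right t)]
    refine Finset.sum_congr rfl fun k _ => ?_
    rw [Finset.sum_comm]
    refine Finset.sum_congr rfl fun t _ => ?_
    rw [TensorProduct.sum_tmul, map_sum]
    exact Finset.sum_congr rfl fun l _ => TensorProduct.tensorTensorTensorComm_tmul ..
  rw [conv, LinearMap.comp_apply, LinearMap.comp_apply, h2, map_sum, map_sum]
  refine Finset.sum_congr rfl fun k _ => ?_
  rw [map_sum, map_sum]
  refine Finset.sum_congr rfl fun l _ => ?_
  rw [map_sum, map_sum]
  exact Finset.sum_congr rfl fun t _ => by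
    rw [TensorProduct.map_tmul, LinearMap.mul'_apply]

lemma sum_counit_mul_right {r : A} {ι : Type*} (rr : Coalgebra.Repr ℂ r ι) (P : A) (Q : ℂ) :
    ∑ t ∈ rr.index, c.J (P ⊗ₜ[ℂ] rr.left t) * (Q * counit (R := ℂ) (rr.right t))
      = c.J (P ⊗ₜ[ℂ] r) * Q := by
  calc ∑ t ∈ rr.index, c.J (P ⊗ₜ[ℂ] rr.left t) * (Q * counit (R := ℂ) (rr.right t))
      = (∑ t ∈ rr.index, counit (R := ℂ) (rr.right t) • c.J (P ⊗ₜ[ℂ] rr.left t)) * Q := by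
        rw [Finset.sum_mul]
        exact Finset.sum_congr rfl fun t _ => by rw [smul_eq_mul]; ring
    _ = c.J (P ⊗ₜ[ℂ] ∑ t ∈ rr.index, counit (R := ℂ) (rr.right t) • rr.left t) * Q := by
        congr 1
        rw [TensorProduct.tmul_sum, map_sum]
        exact Finset.sum_congr rfl fun t _ => by rw [TensorProduct.tmul_smul, map_smul]
    _ = c.J (P ⊗ₜ[ℂ] r) * Q := by rw [repr_counit_smul_left rr]

lemma sum_counit_mul_left {p : A} {ι : Type*} (rp : Coalgebra.Repr ℂ p ι) (Y : A) (Q : ℂ) :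
    ∑ k ∈ rp.index, c.J (rp.left k ⊗ₜ[ℂ] Y) * (counit (R := ℂ) (rp.right k) * Q)
      = c.J (p ⊗ₜ[ℂ] Y) * Q := by
  calc ∑ k ∈ rp.index, c.J (rp.left k ⊗ₜ[ℂ] Y) * (counit (R := ℂ) (rp.right k) * Q)
      = (∑ k ∈ rp.index, counit (R := ℂ) (rp.right k) • c.J (rp.left k ⊗ₜ[ℂ] Y)) * Q := by
        rw [Finset.sum_mul]
        exact Finset.sum_congr rfl fun k _ => by rw [smul_eq_mul]; ring
    _ = c.J ((∑ k ∈ rp.index, counit (R := ℂ) (rp.right k) • rp.left k) ⊗ₜ[ℂ] Y) * Q := by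
        congr 1
        rw [TensorProduct.sum_tmul, map_sum]
        exact Finset.sum_congr rfl fun k _ => by rw [← TensorProduct.smul_tmul', map_smul]
    _ = c.J (p ⊗ₜ[ℂ] Y) * Q := by rw [repr_counit_smul_left rp]

/-- The cocycle identity in Sweedler-sum form. -/
lemma cocycle_eval (p q r : A)
    {ι κ μ : Type*} (rp : Coalgebra.Repr ℂ p ι) (rq : Coalgebra.Repr ℂ q κ) (rr : Coalgebra.Repr ℂ r μ) :
    ∑ k ∈ rp.index, ∑ l ∈ rq.index,
        c.J ((rp.left k * rq.left l) ⊗ₜ[ℂ] r) * c.J (rp.right k ⊗ₜ[ℂ] rq.right l)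
      = ∑ l ∈ rq.index, ∑ t ∈ rr.index,
        c.J (p ⊗ₜ[ℂ] (rq.left l * rr.left t)) * c.J (rq.right l ⊗ₜ[ℂ] rr.right t) := by
  have h := LinearMap.congr_fun c.cocycle ((p ⊗ₜ[ℂ] q) ⊗ₜ[ℂ] r)
  rw [conv_apply_reps _ _ _ _ _ rp rq rr, conv_apply_reps _ _ _ _ _ rp rq rr] at h
  simp only [LinearMap.comp_apply, TensorProduct.map_tmul, LinearMap.mul'_apply,
    LinearMap.id_coe, id_eq, LinearEquiv.coe_coe, TensorProduct.assoc_tmul] at h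
  calc ∑ k ∈ rp.index, ∑ l ∈ rq.index,
        c.J ((rp.left k * rq.left l) ⊗ₜ[ℂ] r) * c.J (rp.right k ⊗ₜ[ℂ] rq.right l)
      = ∑ k ∈ rp.index, ∑ l ∈ rq.index, ∑ t ∈ rr.index,
          c.J ((rp.left k * rq.left l) ⊗ₜ[ℂ] rr.left t) *
            (c.J (rp.right k ⊗ₜ[ℂ] rq.right l) * counit (R := ℂ) (rr.right t)) := by
        exact Finset.sum_congr rfl fun k _ => Finset.sum_congr rfl fun l _ =>
          (sum_counit_mul_right c rr _ _).symm
    _ = ∑ k ∈ rp.index, ∑ l ∈ rq.index, ∑ t ∈ rr.index,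
          c.J (rp.left k ⊗ₜ[ℂ] (rq.left l * rr.left t)) *
            (counit (R := ℂ) (rp.right k) * c.J (rq.right l ⊗ₜ[ℂ] rr.right t)) := h
    _ = ∑ l ∈ rq.index, ∑ t ∈ rr.index,
        c.J (p ⊗ₜ[ℂ] (rq.left l * rr.left t)) * c.J (rq.right l ⊗ₜ[ℂ] rr.right t) := by
        rw [Finset.sum_comm]
        refine Finset.sum_congr rfl fun l _ => ?_
        rw [Finset.sum_comm]
        exact Finset.sum_congr rfl fun t _ => sum_counit_mul_left c rp _ _

end Aux3
section Aux4
open Coalgebra TensorProduct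

variable {A : Type*} [CommRing A] [HopfAlgebra ℂ A] (c : Hopf2Cocycle A)

lemma sum2_smul {M : Type*} [AddCommMonoid M] [Module ℂ M] {ι κ : Type*}
    (s : Finset ι) (t : Finset κ) (f : ι → κ → ℂ) (V : M) :
    ∑ k ∈ s, ∑ l ∈ t, f k l • V = (∑ k ∈ s, ∑ l ∈ t, f k l) • V := by
  rw [Finset.sum_smul]
  refine Finset.sum_congr rfl fun k _ => ?_
  rw [Finset.sum_smul]

lemma sum_comm_5 {M : Type*} [AddCommMonoid M] {ι ι₂ ι₃ : Type*}
    {κ₂ : ι₂ → Type*} {κ₃ : ι₃ → Type*}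
    (s : Finset ι) (s₂ : Finset ι₂) (s₃ : Finset ι₃)
    (t₂ : ∀ j, Finset (κ₂ j)) (t₃ : ∀ m, Finset (κ₃ m))
    (f : (i : ι) → (j : ι₂) → (m : ι₃) → κ₂ j → κ₃ m → M) :
    ∑ i ∈ s, ∑ j ∈ s₂, ∑ m ∈ s₃, ∑ l ∈ t₂ j, ∑ t ∈ t₃ m, f i j m l t
      = ∑ j ∈ s₂, ∑ m ∈ s₃, ∑ l ∈ t₂ j, ∑ t ∈ t₃ m, ∑ i ∈ s, f i j m l t := by
  rw [Finset.sum_comm]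
  refine Finset.sum_congr rfl fun j _ => ?_
  rw [Finset.sum_comm]
  refine Finset.sum_congr rfl fun m _ => ?_
  rw [Finset.sum_comm]
  refine Finset.sum_congr rfl fun l _ => ?_
  rw [Finset.sum_comm]

lemma mulJ_assoc (a b w : A) :
    c.mulJ (c.mulJ (a ⊗ₜ[ℂ] b) ⊗ₜ[ℂ] w) = c.mulJ (a ⊗ₜ[ℂ] c.mulJ (b ⊗ₜ[ℂ] w)) := by
  have hL : c.mulJ (c.mulJ (a ⊗ₜ[ℂ] b) ⊗ₜ[ℂ] w)
      = ∑ i ∈ (ℛ ℂ a).index, ∑ j ∈ (ℛ ℂ b).index, ∑ m ∈ (ℛ ℂ w).index,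
        ∑ l ∈ (ℛ ℂ ((ℛ ℂ b).right j)).index, ∑ t ∈ (ℛ ℂ ((ℛ ℂ w).right m)).index,
          (c.J ((ℛ ℂ a).right i ⊗ₜ[ℂ]
              ((ℛ ℂ ((ℛ ℂ b).right j)).left l * (ℛ ℂ ((ℛ ℂ w).right m)).left t))
            * c.J ((ℛ ℂ ((ℛ ℂ b).right j)).right l ⊗ₜ[ℂ] (ℛ ℂ ((ℛ ℂ w).right m)).right t))
          • ((ℛ ℂ a).left i * (ℛ ℂ b).left j * (ℛ ℂ w).left m) := by
    calc c.mulJ (c.mulJ (a ⊗ₜ[ℂ] b) ⊗ₜ[ℂ] w)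
        = ∑ i ∈ (ℛ ℂ a).index, ∑ j ∈ (ℛ ℂ b).index,
            c.J ((ℛ ℂ a).right i ⊗ₜ[ℂ] (ℛ ℂ b).right j)
              • c.mulJ (((ℛ ℂ a).left i * (ℛ ℂ b).left j) ⊗ₜ[ℂ] w) := by
          rw [mulJ_repr c a b (ℛ ℂ a) (ℛ ℂ b), TensorProduct.sum_tmul, map_sum]
          refine Finset.sum_congr rfl fun i _ => ?_
          rw [TensorProduct.sum_tmul, map_sum]
          refine Finset.sum_congr rfl fun j _ => ?_
          rw [← TensorProduct.smul_tmul', map_smul]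
      _ = ∑ i ∈ (ℛ ℂ a).index, ∑ j ∈ (ℛ ℂ b).index,
            ∑ k ∈ (ℛ ℂ ((ℛ ℂ a).left i)).index, ∑ l ∈ (ℛ ℂ ((ℛ ℂ b).left j)).index,
              GadL c (comul (R := ℂ) w)
                (((ℛ ℂ ((ℛ ℂ a).left i)).left k ⊗ₜ[ℂ]
                    ((ℛ ℂ ((ℛ ℂ a).left i)).right k ⊗ₜ[ℂ] (ℛ ℂ a).right i)) ⊗ₜ[ℂ]
                 ((ℛ ℂ ((ℛ ℂ b).left j)).left l ⊗ₜ[ℂ]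
                    ((ℛ ℂ ((ℛ ℂ b).left j)).right l ⊗ₜ[ℂ] (ℛ ℂ b).right j))) := by
          refine Finset.sum_congr rfl fun i _ => Finset.sum_congr rfl fun j _ => ?_
          rw [mulJ_repr c _ w (reprMul (ℛ ℂ ((ℛ ℂ a).left i)) (ℛ ℂ ((ℛ ℂ b).left j))) (ℛ ℂ w)]
          simp only [reprMul]
          rw [Finset.sum_product, Finset.smul_sum]
          refine Finset.sum_congr rfl fun k _ => ?_
          rw [Finset.smul_sum]
          refine Finset.sum_congr rfl fun l _ => ?_
          rw [GadL_tmul, Psi_repr c (ℛ ℂ w), Finset.mul_sum]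
          congr 1
          refine Finset.sum_congr rfl fun m _ => ?_
          rw [mul_smul_comm]
      _ = ∑ i ∈ (ℛ ℂ a).index, ∑ j ∈ (ℛ ℂ b).index,
            ∑ k ∈ (ℛ ℂ ((ℛ ℂ a).right i)).index, ∑ l ∈ (ℛ ℂ ((ℛ ℂ b).right j)).index,
              GadL c (comul (R := ℂ) w)
                (((ℛ ℂ a).left i ⊗ₜ[ℂ]
                    ((ℛ ℂ ((ℛ ℂ a).right i)).left k ⊗ₜ[ℂ] (ℛ ℂ ((ℛ ℂ a).right i)).right k)) ⊗ₜ[ℂ]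
                 ((ℛ ℂ b).left j ⊗ₜ[ℂ]
                    ((ℛ ℂ ((ℛ ℂ b).right j)).left l ⊗ₜ[ℂ] (ℛ ℂ ((ℛ ℂ b).right j)).right l))) :=
          sum4_coassoc (GadL c (comul (R := ℂ) w)) (ℛ ℂ a) (ℛ ℂ b)
            (fun i => ℛ ℂ _) (fun i => ℛ ℂ _) (fun j => ℛ ℂ _) (fun j => ℛ ℂ _)
      _ = _ := by
          refine Finset.sum_congr rfl fun i _ => Finset.sum_congr rfl fun j _ => ?_
          calc ∑ k ∈ (ℛ ℂ ((ℛ ℂ a).right i)).index, ∑ l ∈ (ℛ ℂ ((ℛ ℂ b).right j)).index,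
                GadL c (comul (R := ℂ) w)
                  (((ℛ ℂ a).left i ⊗ₜ[ℂ]
                      ((ℛ ℂ ((ℛ ℂ a).right i)).left k ⊗ₜ[ℂ] (ℛ ℂ ((ℛ ℂ a).right i)).right k)) ⊗ₜ[ℂ]
                   ((ℛ ℂ b).left j ⊗ₜ[ℂ]
                      ((ℛ ℂ ((ℛ ℂ b).right j)).left l ⊗ₜ[ℂ] (ℛ ℂ ((ℛ ℂ b).right j)).right l)))
              = ∑ k ∈ (ℛ ℂ ((ℛ ℂ a).right i)).index, ∑ l ∈ (ℛ ℂ ((ℛ ℂ b).right j)).index,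
                ∑ m ∈ (ℛ ℂ w).index,
                  (c.J (((ℛ ℂ ((ℛ ℂ a).right i)).left k * (ℛ ℂ ((ℛ ℂ b).right j)).left l)
                      ⊗ₜ[ℂ] (ℛ ℂ w).right m)
                    * c.J ((ℛ ℂ ((ℛ ℂ a).right i)).right k ⊗ₜ[ℂ] (ℛ ℂ ((ℛ ℂ b).right j)).right l))
                  • ((ℛ ℂ a).left i * (ℛ ℂ b).left j * (ℛ ℂ w).left m) := by
                refine Finset.sum_congr rfl fun k _ => Finset.sum_congr rfl fun l _ => ?_
                rw [GadL_tmul, Psi_repr c (ℛ ℂ w), Finset.mul_sum, Finset.smul_sum]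
                refine Finset.sum_congr rfl fun m _ => ?_
                rw [mul_smul_comm, smul_smul, mul_comm]
            _ = ∑ m ∈ (ℛ ℂ w).index, ∑ k ∈ (ℛ ℂ ((ℛ ℂ a).right i)).index,
                  ∑ l ∈ (ℛ ℂ ((ℛ ℂ b).right j)).index,
                  (c.J (((ℛ ℂ ((ℛ ℂ a).right i)).left k * (ℛ ℂ ((ℛ ℂ b).right j)).left l)
                      ⊗ₜ[ℂ] (ℛ ℂ w).right m)
                    * c.J ((ℛ ℂ ((ℛ ℂ a).right i)).right k ⊗ₜ[ℂ] (ℛ ℂ ((ℛ ℂ b).right j)).right l))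
                  • ((ℛ ℂ a).left i * (ℛ ℂ b).left j * (ℛ ℂ w).left m) := by
                rw [show (∑ k ∈ (ℛ ℂ ((ℛ ℂ a).right i)).index,
                    ∑ l ∈ (ℛ ℂ ((ℛ ℂ b).right j)).index, ∑ m ∈ (ℛ ℂ w).index,
                    (c.J (((ℛ ℂ ((ℛ ℂ a).right i)).left k * (ℛ ℂ ((ℛ ℂ b).right j)).left l)
                        ⊗ₜ[ℂ] (ℛ ℂ w).right m)
                      * c.J ((ℛ ℂ ((ℛ ℂ a).right i)).right k ⊗ₜ[ℂ] (ℛ ℂ ((ℛ ℂ b).right j)).right l))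
                    • ((ℛ ℂ a).left i * (ℛ ℂ b).left j * (ℛ ℂ w).left m))
                  = ∑ k ∈ (ℛ ℂ ((ℛ ℂ a).right i)).index, ∑ m ∈ (ℛ ℂ w).index,
                    ∑ l ∈ (ℛ ℂ ((ℛ ℂ b).right j)).index,
                    (c.J (((ℛ ℂ ((ℛ ℂ a).right i)).left k * (ℛ ℂ ((ℛ ℂ b).right j)).left l)
                        ⊗ₜ[ℂ] (ℛ ℂ w).right m)
                      * c.J ((ℛ ℂ ((ℛ ℂ a).right i)).right k ⊗ₜ[ℂ] (ℛ ℂ ((ℛ ℂ b).right j)).right l))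
                    • ((ℛ ℂ a).left i * (ℛ ℂ b).left j * (ℛ ℂ w).left m)
                  from Finset.sum_congr rfl fun k _ => Finset.sum_comm]
                exact Finset.sum_comm
            _ = ∑ m ∈ (ℛ ℂ w).index,
                ∑ l ∈ (ℛ ℂ ((ℛ ℂ b).right j)).index, ∑ t ∈ (ℛ ℂ ((ℛ ℂ w).right m)).index,
                  (c.J ((ℛ ℂ a).right i ⊗ₜ[ℂ]
                      ((ℛ ℂ ((ℛ ℂ b).right j)).left l * (ℛ ℂ ((ℛ ℂ w).right m)).left t))
                    * c.J ((ℛ ℂ ((ℛ ℂ b).right j)).right l ⊗ₜ[ℂ] (ℛ ℂ ((ℛ ℂ w).right m)).right t))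
                  • ((ℛ ℂ a).left i * (ℛ ℂ b).left j * (ℛ ℂ w).left m) := by
                refine Finset.sum_congr rfl fun m _ => ?_
                rw [sum2_smul, sum2_smul,
                  cocycle_eval c ((ℛ ℂ a).right i) ((ℛ ℂ b).right j) ((ℛ ℂ w).right m)
                    (ℛ ℂ _) (ℛ ℂ _) (ℛ ℂ _)]
  have hR : c.mulJ (a ⊗ₜ[ℂ] c.mulJ (b ⊗ₜ[ℂ] w))
      = ∑ j ∈ (ℛ ℂ b).index, ∑ m ∈ (ℛ ℂ w).index,
        ∑ l ∈ (ℛ ℂ ((ℛ ℂ b).right j)).index, ∑ t ∈ (ℛ ℂ ((ℛ ℂ w).right m)).index,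
        ∑ i ∈ (ℛ ℂ a).index,
          (c.J ((ℛ ℂ a).right i ⊗ₜ[ℂ]
              ((ℛ ℂ ((ℛ ℂ b).right j)).left l * (ℛ ℂ ((ℛ ℂ w).right m)).left t))
            * c.J ((ℛ ℂ ((ℛ ℂ b).right j)).right l ⊗ₜ[ℂ] (ℛ ℂ ((ℛ ℂ w).right m)).right t))
          • ((ℛ ℂ a).left i * (ℛ ℂ b).left j * (ℛ ℂ w).left m) := by
    calc c.mulJ (a ⊗ₜ[ℂ] c.mulJ (b ⊗ₜ[ℂ] w))
        = ∑ j ∈ (ℛ ℂ b).index, ∑ m ∈ (ℛ ℂ w).index,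
            c.J ((ℛ ℂ b).right j ⊗ₜ[ℂ] (ℛ ℂ w).right m)
              • c.mulJ (a ⊗ₜ[ℂ] ((ℛ ℂ b).left j * (ℛ ℂ w).left m)) := by
          rw [mulJ_repr c b w (ℛ ℂ b) (ℛ ℂ w), TensorProduct.tmul_sum, map_sum]
          refine Finset.sum_congr rfl fun j _ => ?_
          rw [TensorProduct.tmul_sum, map_sum]
          refine Finset.sum_congr rfl fun m _ => ?_
          rw [TensorProduct.tmul_smul, map_smul]
      _ = ∑ j ∈ (ℛ ℂ b).index, ∑ m ∈ (ℛ ℂ w).index,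
            ∑ k ∈ (ℛ ℂ ((ℛ ℂ b).left j)).index, ∑ l ∈ (ℛ ℂ ((ℛ ℂ w).left m)).index,
              GadR c (comul (R := ℂ) a)
                (((ℛ ℂ ((ℛ ℂ b).left j)).left k ⊗ₜ[ℂ]
                    ((ℛ ℂ ((ℛ ℂ b).left j)).right k ⊗ₜ[ℂ] (ℛ ℂ b).right j)) ⊗ₜ[ℂ]
                 ((ℛ ℂ ((ℛ ℂ w).left m)).left l ⊗ₜ[ℂ]
                    ((ℛ ℂ ((ℛ ℂ w).left m)).right l ⊗ₜ[ℂ] (ℛ ℂ w).right m))) := by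
          refine Finset.sum_congr rfl fun j _ => Finset.sum_congr rfl fun m _ => ?_
          rw [mulJ_tmul, ← (reprMul (ℛ ℂ ((ℛ ℂ b).left j)) (ℛ ℂ ((ℛ ℂ w).left m))).eq]
          simp only [reprMul]
          rw [TensorProduct.tmul_sum, map_sum, Finset.sum_product, Finset.smul_sum]
          refine Finset.sum_congr rfl fun k _ => ?_
          rw [Finset.smul_sum]
          refine Finset.sum_congr rfl fun l _ => ?_
          rw [GadR_tmul]
      _ = ∑ j ∈ (ℛ ℂ b).index, ∑ m ∈ (ℛ ℂ w).index,
            ∑ l ∈ (ℛ ℂ ((ℛ ℂ b).right j)).index, ∑ t ∈ (ℛ ℂ ((ℛ ℂ w).right m)).index,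
              GadR c (comul (R := ℂ) a)
                (((ℛ ℂ b).left j ⊗ₜ[ℂ]
                    ((ℛ ℂ ((ℛ ℂ b).right j)).left l ⊗ₜ[ℂ] (ℛ ℂ ((ℛ ℂ b).right j)).right l)) ⊗ₜ[ℂ]
                 ((ℛ ℂ w).left m ⊗ₜ[ℂ]
                    ((ℛ ℂ ((ℛ ℂ w).right m)).left t ⊗ₜ[ℂ] (ℛ ℂ ((ℛ ℂ w).right m)).right t))) :=
          sum4_coassoc (GadR c (comul (R := ℂ) a)) (ℛ ℂ b) (ℛ ℂ w)
            (fun j => ℛ ℂ _) (fun j => ℛ ℂ _) (fun m => ℛ ℂ _) (fun m => ℛ ℂ _)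
      _ = _ := by
          refine Finset.sum_congr rfl fun j _ => Finset.sum_congr rfl fun m _ =>
            Finset.sum_congr rfl fun l _ => Finset.sum_congr rfl fun t _ => ?_
          rw [GadR_tmul, Phi_comul_left c (ℛ ℂ a), Finset.smul_sum]
          refine Finset.sum_congr rfl fun i _ => ?_
          rw [smul_smul, mul_comm, ← mul_assoc]
  rw [hL, hR]
  exact sum_comm_5 _ _ _ _ _ _
end Aux4
section Aux5
open Coalgebra TensorProduct

variable {A : Type*} [CommRing A] [HopfAlgebra ℂ A]
variable (B : Subalgebra ℂ A) (z : A)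

/-- `gmap f = ∑ f n * z ^ n`. -/
def gmap : (ℕ →₀ ↥B) →ₗ[ℂ] A :=
  Finsupp.lsum ℂ fun n => (LinearMap.mulRight ℂ (z ^ n)) ∘ₗ B.toSubmodule.subtype

lemma gmap_single (n : ℕ) (b : ↥B) : gmap B z (Finsupp.single n b) = (b : A) * z ^ n := by
  simp [gmap]
  rfl

lemma gmap_apply (f : ℕ →₀ ↥B) :
    gmap B z f = ∑ n ∈ f.support, (f n : A) * z ^ n := by
  rw [gmap, Finsupp.lsum_apply]
  rfl

lemma gmap_eq_aeval (f : ℕ →₀ ↥B) :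
    gmap B z f = Polynomial.aeval z (⟨AddMonoidAlgebra.ofCoeff f⟩ : Polynomial ↥B) := by
  rw [gmap_apply, Polynomial.aeval_def, Polynomial.eval₂_eq_sum, Polynomial.sum_def]
  rw [Polynomial.support_ofFinsupp]
  refine Finset.sum_congr rfl fun n _ => ?_
  rw [Polynomial.coeff_ofFinsupp, AddMonoidAlgebra.coeff_ofCoeff]
  rw [Subalgebra.algebraMap_eq]
  simp

/-- The filtration `M n = B + B z + ⋯ + B zⁿ`. -/
def MM (n : ℕ) : Submodule ℂ A :=
  (Finsupp.supported ↥B ℂ (↑(Finset.range (n + 1)) : Set ℕ)).map (gmap B z)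

lemma mem_MM_iff {n : ℕ} {a : A} :
    a ∈ MM B z n ↔ ∃ f : ℕ →₀ ↥B, (f.support : Set ℕ) ⊆ ↑(Finset.range (n + 1))
      ∧ gmap B z f = a := by
  constructor
  · rintro ⟨f, hf, rfl⟩
    exact ⟨f, (Finsupp.mem_supported _ _).1 hf, rfl⟩
  · rintro ⟨f, hf, rfl⟩
    exact ⟨f, (Finsupp.mem_supported _ _).2 hf, rfl⟩

lemma MM_mono {m n : ℕ} (h : m ≤ n) : MM B z m ≤ MM B z n := by
  apply Submodule.map_mono
  apply Finsupp.supported_mono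
  intro x hx
  simp only [Finset.coe_range, Set.mem_Iio] at hx ⊢
  omega

lemma mul_zpow_mem_MM {k n : ℕ} (hk : k ≤ n) (b : ↥B) : (b : A) * z ^ k ∈ MM B z n := by
  rw [mem_MM_iff]
  refine ⟨Finsupp.single k b, ?_, gmap_single ..⟩
  intro x hx
  have := Finsupp.support_single_subset hx
  simp only [Finset.mem_singleton] at this
  simp [this]
  omega

lemma mem_MM_of_mem_B {n : ℕ} {x : A} (hx : x ∈ B) : x ∈ MM B z n := by
  simpa using mul_zpow_mem_MM B z (Nat.zero_le n) ⟨x, hx⟩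

lemma one_mem_MM (n : ℕ) : (1 : A) ∈ MM B z n := mem_MM_of_mem_B B z B.one_mem

lemma zpow_mem_MM {k n : ℕ} (hk : k ≤ n) : z ^ k ∈ MM B z n := by
  simpa using mul_zpow_mem_MM B z hk 1

lemma z_mem_MM {n : ℕ} (h : 1 ≤ n) : z ∈ MM B z n := by
  simpa using zpow_mem_MM B z (k := 1) h

lemma MM_zero_le : MM B z 0 ≤ B.toSubmodule := by
  rintro _ ⟨f, hf, rfl⟩
  rw [gmap_apply]
  refine Submodule.sum_mem _ fun n hn => ?_
  have := (Finsupp.mem_supported _ _).1 hf hn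
  simp only [Finset.coe_range, Set.mem_Iio] at this
  have hn0 : n = 0 := by omega
  subst hn0
  rw [pow_zero, mul_one]
  exact (f 0).2

lemma mul_mem_MM {m n : ℕ} {x y : A} (hx : x ∈ MM B z m) (hy : y ∈ MM B z n) :
    x * y ∈ MM B z (m + n) := by
  obtain ⟨f, hf, rfl⟩ := (mem_MM_iff B z).1 hx
  obtain ⟨g, hg, rfl⟩ := (mem_MM_iff B z).1 hy
  rw [gmap_apply, gmap_apply, Finset.sum_mul_sum]
  refine Submodule.sum_mem _ fun k hk => Submodule.sum_mem _ fun l hl => ?_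
  have hk' : k ≤ m := by
    have := hf hk; simp only [Finset.coe_range, Set.mem_Iio] at this; omega
  have hl' : l ≤ n := by
    have := hg hl; simp only [Finset.coe_range, Set.mem_Iio] at this; omega
  have : (f k : A) * z ^ k * ((g l : A) * z ^ l)
      = ((f k * g l : ↥B) : A) * z ^ (k + l) := by
    push_cast
    rw [pow_add]
    ring
  rw [this]
  exact mul_zpow_mem_MM B z (by omega) _

lemma gmap_injective (hpoly : Function.Injective
    (fun p : Polynomial ↥B => (Polynomial.aeval z p : A))) :
    Function.Injective (gmap B z) := by
  intro f g hfg
  rw [gmap_eq_aeval, gmap_eq_aeval] at hfg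
  have := hpoly hfg
  rwa [Polynomial.ofFinsupp.injEq, AddMonoidAlgebra.ofCoeff_inj] at this

lemma exists_MM (hpoly : Function.Surjective
    (fun p : Polynomial ↥B => (Polynomial.aeval z p : A))) (a : A) :
    ∃ n, a ∈ MM B z n := by
  obtain ⟨p, rfl⟩ := hpoly a
  refine ⟨p.natDegree, (mem_MM_iff B z).2 ⟨p.toFinsupp.coeff, ?_, ?_⟩⟩
  · intro x hx
    simp only [Finset.coe_range, Set.mem_Iio]
    have : x ∈ p.support := by
      rw [← Polynomial.support_toFinsupp]
      exact hx
    have := Polynomial.le_natDegree_of_mem_supp x this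
    omega
  · rw [gmap_eq_aeval]

end Aux5
section Aux6
open Coalgebra TensorProduct

variable {A : Type*} [CommRing A] [HopfAlgebra ℂ A]
variable (B : Subalgebra ℂ A) (z : A)

lemma range_map_le {p q : Submodule ℂ A} {Q : Submodule ℂ (A ⊗[ℂ] A)}
    (h : ∀ x ∈ p, ∀ y ∈ q, x ⊗ₜ[ℂ] y ∈ Q) :
    LinearMap.range (TensorProduct.map p.subtype q.subtype) ≤ Q := by
  rintro _ ⟨t, rfl⟩
  induction t using TensorProduct.induction_on with
  | zero => simpa using Q.zero_mem
  | tmul u v => simpa using h u u.2 v v.2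
  | add s t hs ht => rw [map_add]; exact Q.add_mem hs ht

def TT (i j : ℕ) : Submodule ℂ (A ⊗[ℂ] A) :=
  LinearMap.range (TensorProduct.map (MM B z i).subtype (MM B z j).subtype)

lemma tmul_mem_TT {i j : ℕ} {x y : A} (hx : x ∈ MM B z i) (hy : y ∈ MM B z j) :
    x ⊗ₜ[ℂ] y ∈ TT B z i j :=
  ⟨(⟨x, hx⟩ : MM B z i) ⊗ₜ[ℂ] (⟨y, hy⟩ : MM B z j), rfl⟩

lemma TT_le {i j : ℕ} {Q : Submodule ℂ (A ⊗[ℂ] A)}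
    (h : ∀ x ∈ MM B z i, ∀ y ∈ MM B z j, x ⊗ₜ[ℂ] y ∈ Q) : TT B z i j ≤ Q :=
  range_map_le h

lemma TT_mono {i j i' j' : ℕ} (hi : i ≤ i') (hj : j ≤ j') : TT B z i j ≤ TT B z i' j' :=
  TT_le B z fun x hx y hy =>
    tmul_mem_TT B z (MM_mono B z hi hx) (MM_mono B z hj hy)

lemma mul_mem_TT {i j i' j' : ℕ} {s t : A ⊗[ℂ] A}
    (hs : s ∈ TT B z i j) (ht : t ∈ TT B z i' j') : s * t ∈ TT B z (i + i') (j + j') := by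
  have h1 : ∀ x ∈ MM B z i, ∀ y ∈ MM B z j,
      (x ⊗ₜ[ℂ] y) * t ∈ TT B z (i + i') (j + j') := by
    intro x hx y hy
    have h2 : TT B z i' j' ≤ Submodule.comap (LinearMap.mulLeft ℂ (x ⊗ₜ[ℂ] y))
        (TT B z (i + i') (j + j')) := TT_le B z fun x' hx' y' hy' => by
      simp only [Submodule.mem_comap, LinearMap.mulLeft_apply,
        Algebra.TensorProduct.tmul_mul_tmul]
      exact tmul_mem_TT B z (mul_mem_MM B z hx hx') (mul_mem_MM B z hy hy')
    exact h2 ht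
  have h3 : TT B z i j ≤ Submodule.comap (LinearMap.mulRight ℂ t)
      (TT B z (i + i') (j + j')) := TT_le B z fun x hx y hy => h1 x hx y hy
  exact h3 hs

def TTlow : ℕ → Submodule ℂ (A ⊗[ℂ] A)
  | 0 => ⊥
  | m + 1 => TT B z m (m + 1)

def MMlow : ℕ → Submodule ℂ A
  | 0 => ⊥
  | n + 1 => MM B z n

lemma TTlow_le (m : ℕ) : TTlow B z m ≤ TT B z m m := by
  cases m with
  | zero => exact bot_le
  | succ k => exact TT_mono B z (Nat.le_succ k) (le_refl _)

lemma MMlow_le (n : ℕ) : MMlow B z n ≤ MM B z n := by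
  cases n with
  | zero => exact bot_le
  | succ k => exact MM_mono B z (Nat.le_succ k)

lemma MMlow_mono {m n : ℕ} (h : m ≤ n) : MMlow B z m ≤ MMlow B z n := by
  cases m with
  | zero => exact bot_le
  | succ k =>
    cases n with
    | zero => omega
    | succ l => exact MM_mono B z (by omega)

lemma TT00_mul_TTlow {m : ℕ} {s t : A ⊗[ℂ] A}
    (hs : s ∈ TT B z 0 0) (ht : t ∈ TTlow B z m) : s * t ∈ TTlow B z m := by
  cases m with
  | zero =>
    have : t = 0 := ht
    simp [this]
  | succ k =>
    have := mul_mem_TT B z hs ht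
    simpa [TTlow] using this

lemma TTlow_mul_TT11 {m : ℕ} {s t : A ⊗[ℂ] A}
    (hs : s ∈ TTlow B z m) (ht : t ∈ TT B z 1 1) : s * t ∈ TT B z m (m + 1) := by
  cases m with
  | zero =>
    have : s = 0 := hs
    simp only [this, zero_mul]
    exact Submodule.zero_mem _
  | succ k =>
    have := mul_mem_TT B z hs ht
    simpa [Nat.succ_eq_add_one] using this

section WithHyp
variable (hBcoalg : ∀ x ∈ B, Coalgebra.comul (R := ℂ) x ∈
      LinearMap.range (TensorProduct.map B.toSubmodule.subtype B.toSubmodule.subtype))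
variable (hz : Coalgebra.comul (R := ℂ) z - z ⊗ₜ[ℂ] (1 : A) - (1 : A) ⊗ₜ[ℂ] z ∈
      LinearMap.range (TensorProduct.map
        (B.toSubmodule ⊓ LinearMap.ker (Coalgebra.counit (R := ℂ) (A := A))).subtype
        (B.toSubmodule ⊓ LinearMap.ker (Coalgebra.counit (R := ℂ) (A := A))).subtype))

include hBcoalg in
lemma comul_mem_TT00 {x : A} (hx : x ∈ B) : comul (R := ℂ) x ∈ TT B z 0 0 :=
  range_map_le (fun u hu v hv =>
    tmul_mem_TT B z (mem_MM_of_mem_B B z hu) (mem_MM_of_mem_B B z hv)) (hBcoalg x hx)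

include hz in
lemma comul_z_decomp : ∃ w ∈ TT B z 0 0,
    comul (R := ℂ) z = z ⊗ₜ[ℂ] (1 : A) + (1 : A) ⊗ₜ[ℂ] z + w := by
  refine ⟨comul (R := ℂ) z - z ⊗ₜ[ℂ] (1 : A) - (1 : A) ⊗ₜ[ℂ] z, ?_, by ring⟩
  refine range_map_le (fun u hu v hv => ?_) hz
  exact tmul_mem_TT B z (mem_MM_of_mem_B B z hu.1) (mem_MM_of_mem_B B z hv.1)

include hz in
lemma comul_zpow (m : ℕ) :
    comul (R := ℂ) (z ^ m) - (z ^ m) ⊗ₜ[ℂ] (1 : A) ∈ TTlow B z m := by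
  obtain ⟨w, hw, hzeq⟩ := comul_z_decomp B z hz
  induction m with
  | zero =>
    simp only [pow_zero, Bialgebra.comul_one, Algebra.TensorProduct.one_def, sub_self]
    exact Submodule.zero_mem _
  | succ m ih =>
    have hΔ : comul (R := ℂ) (z ^ (m + 1))
        = ((z ^ m) ⊗ₜ[ℂ] (1 : A) + (comul (R := ℂ) (z ^ m) - (z ^ m) ⊗ₜ[ℂ] (1 : A)))
          * (z ⊗ₜ[ℂ] (1 : A) + (1 : A) ⊗ₜ[ℂ] z + w) := by
      rw [pow_succ, Bialgebra.comul_mul, hzeq]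
      ring
    have h1 : ((z ^ m) ⊗ₜ[ℂ] (1 : A)) * (z ⊗ₜ[ℂ] (1 : A)) = (z ^ (m + 1)) ⊗ₜ[ℂ] (1 : A) := by
      rw [Algebra.TensorProduct.tmul_mul_tmul, mul_one, pow_succ]
    have h2 : ((z ^ m) ⊗ₜ[ℂ] (1 : A)) * ((1 : A) ⊗ₜ[ℂ] z) = (z ^ m) ⊗ₜ[ℂ] z := by
      rw [Algebra.TensorProduct.tmul_mul_tmul, mul_one, one_mul]
    have key : comul (R := ℂ) (z ^ (m + 1)) - (z ^ (m + 1)) ⊗ₜ[ℂ] (1 : A)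
        = (z ^ m) ⊗ₜ[ℂ] z + ((z ^ m) ⊗ₜ[ℂ] (1 : A)) * w
          + (comul (R := ℂ) (z ^ m) - (z ^ m) ⊗ₜ[ℂ] (1 : A))
            * (z ⊗ₜ[ℂ] (1 : A) + (1 : A) ⊗ₜ[ℂ] z + w) := by
      rw [hΔ]
      linear_combination h1 + h2
    show _ ∈ TT B z m (m + 1)
    rw [key]
    refine Submodule.add_mem _ (Submodule.add_mem _ ?_ ?_) ?_
    · exact tmul_mem_TT B z (zpow_mem_MM B z (le_refl m)) (z_mem_MM B z (by omega))
    · have h3 : ((z ^ m) ⊗ₜ[ℂ] (1 : A)) * w ∈ TT B z m 0 := by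
        simpa using mul_mem_TT B z
          (tmul_mem_TT B z (zpow_mem_MM B z (le_refl m)) (one_mem_MM B z 0)) hw
      exact TT_mono B z le_rfl (by omega) h3
    · refine TTlow_mul_TT11 B z ih ?_
      refine Submodule.add_mem _ (Submodule.add_mem _ ?_ ?_) ?_
      · exact tmul_mem_TT B z (z_mem_MM B z le_rfl) (one_mem_MM B z 1)
      · exact tmul_mem_TT B z (one_mem_MM B z 1) (z_mem_MM B z le_rfl)
      · exact TT_mono B z (by omega) (by omega) hw

include hBcoalg hz in
lemma comul_bz (b : ↥B) (m : ℕ) :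
    comul (R := ℂ) ((b : A) * z ^ m)
      - comul (R := ℂ) (b : A) * ((z ^ m) ⊗ₜ[ℂ] (1 : A)) ∈ TTlow B z m := by
  have h : comul (R := ℂ) ((b : A) * z ^ m)
      - comul (R := ℂ) (b : A) * ((z ^ m) ⊗ₜ[ℂ] (1 : A))
      = comul (R := ℂ) (b : A) * (comul (R := ℂ) (z ^ m) - (z ^ m) ⊗ₜ[ℂ] (1 : A)) := by
    rw [Bialgebra.comul_mul]
    ring
  rw [h]
  exact TT00_mul_TTlow B z (comul_mem_TT00 B z hBcoalg b.2) (comul_zpow B z hz m)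

include hBcoalg hz in
lemma comul_MM {m : ℕ} {a : A} (ha : a ∈ MM B z m) : comul (R := ℂ) a ∈ TT B z m m := by
  obtain ⟨f, hf, rfl⟩ := (mem_MM_iff B z).1 ha
  rw [gmap_apply, map_sum]
  refine Submodule.sum_mem _ fun k hk => ?_
  have hk' : k ≤ m := by
    have := hf hk; simp only [Finset.coe_range, Set.mem_Iio] at this; omega
  rw [Bialgebra.comul_mul]
  have h1 : comul (R := ℂ) ((f k : A)) ∈ TT B z 0 0 := comul_mem_TT00 B z hBcoalg (f k).2
  have h2 : comul (R := ℂ) (z ^ k) ∈ TT B z k k := by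
    have := comul_zpow B z hz k
    have heq : comul (R := ℂ) (z ^ k)
        = (z ^ k) ⊗ₜ[ℂ] (1 : A) + (comul (R := ℂ) (z ^ k) - (z ^ k) ⊗ₜ[ℂ] (1 : A)) := by ring
    rw [heq]
    exact Submodule.add_mem _
      (tmul_mem_TT B z (zpow_mem_MM B z le_rfl) (one_mem_MM B z k)) (TTlow_le B z k this)
  have h3 : comul (R := ℂ) ((f k : A)) * comul (R := ℂ) (z ^ k) ∈ TT B z k k := by
    simpa using mul_mem_TT B z h1 h2
  exact TT_mono B z hk' hk' h3

end WithHyp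

variable (c : Hopf2Cocycle A)

lemma Phi_TT {i j i' j' : ℕ} {s t : A ⊗[ℂ] A}
    (hs : s ∈ TT B z i j) (ht : t ∈ TT B z i' j') :
    Phi c (s ⊗ₜ[ℂ] t) ∈ MM B z (i + i') := by
  have h1 : ∀ x ∈ MM B z i, ∀ y ∈ MM B z j,
      Phi c ((x ⊗ₜ[ℂ] y) ⊗ₜ[ℂ] t) ∈ MM B z (i + i') := by
    intro x hx y hy
    have h2 : TT B z i' j' ≤ Submodule.comap
        (Phi c ∘ₗ (TensorProduct.mk ℂ (A ⊗[ℂ] A) (A ⊗[ℂ] A) (x ⊗ₜ[ℂ] y)))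
        (MM B z (i + i')) := TT_le B z fun x' hx' y' hy' => by
      simp only [Submodule.mem_comap, LinearMap.comp_apply, TensorProduct.mk_apply]
      rw [Phi_tmul]
      exact Submodule.smul_mem _ _ (mul_mem_MM B z hx hx')
    exact h2 ht
  have h3 : TT B z i j ≤ Submodule.comap
      (Phi c ∘ₗ ((TensorProduct.mk ℂ (A ⊗[ℂ] A) (A ⊗[ℂ] A)).flip t))
      (MM B z (i + i')) := TT_le B z fun x hx y hy => h1 x hx y hy
  exact h3 hs

lemma Phi_low_right {i j n : ℕ} {s t : A ⊗[ℂ] A}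
    (hs : s ∈ TT B z i j) (ht : t ∈ TTlow B z n) :
    Phi c (s ⊗ₜ[ℂ] t) ∈ MMlow B z (i + n) := by
  cases n with
  | zero =>
    have : t = 0 := ht
    simp only [this, TensorProduct.tmul_zero, map_zero]
    exact Submodule.zero_mem _
  | succ k =>
    have := Phi_TT B z c hs (ht : t ∈ TT B z k (k + 1))
    have heq : i + (k + 1) = (i + k) + 1 := by omega
    rw [heq]
    exact this

lemma Phi_low_left {m i j : ℕ} {s t : A ⊗[ℂ] A}
    (hs : s ∈ TTlow B z m) (ht : t ∈ TT B z i j) :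
    Phi c (s ⊗ₜ[ℂ] t) ∈ MMlow B z (m + i) := by
  cases m with
  | zero =>
    have : s = 0 := hs
    simp only [this, TensorProduct.zero_tmul, map_zero]
    exact Submodule.zero_mem _
  | succ k =>
    have := Phi_TT B z c (hs : s ∈ TT B z k (k + 1)) ht
    have heq : (k + 1) + i = (k + i) + 1 := by omega
    rw [heq]
    exact this

lemma Phi_mul_z (m n : ℕ) (s t : A ⊗[ℂ] A) :
    Phi c ((s * ((z ^ m) ⊗ₜ[ℂ] (1 : A))) ⊗ₜ[ℂ] (t * ((z ^ n) ⊗ₜ[ℂ] (1 : A))))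
      = Phi c (s ⊗ₜ[ℂ] t) * z ^ (m + n) := by
  induction s using TensorProduct.induction_on with
  | zero => simp
  | add s₁ s₂ h₁ h₂ =>
    rw [add_mul, TensorProduct.add_tmul, map_add, h₁, h₂, TensorProduct.add_tmul, map_add,
      add_mul]
  | tmul u u' =>
    induction t using TensorProduct.induction_on with
    | zero => simp
    | add t₁ t₂ h₁ h₂ =>
      rw [add_mul, TensorProduct.tmul_add, map_add, h₁, h₂, TensorProduct.tmul_add, map_add,
        add_mul]
    | tmul v v' =>
      rw [Algebra.TensorProduct.tmul_mul_tmul, Algebra.TensorProduct.tmul_mul_tmul,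
        mul_one, mul_one, Phi_tmul, Phi_tmul, smul_mul_assoc]
      congr 1
      rw [pow_add]
      ring

section KeyLemma
variable (hBcoalg : ∀ x ∈ B, Coalgebra.comul (R := ℂ) x ∈
      LinearMap.range (TensorProduct.map B.toSubmodule.subtype B.toSubmodule.subtype))
variable (hz : Coalgebra.comul (R := ℂ) z - z ⊗ₜ[ℂ] (1 : A) - (1 : A) ⊗ₜ[ℂ] z ∈
      LinearMap.range (TensorProduct.map
        (B.toSubmodule ⊓ LinearMap.ker (Coalgebra.counit (R := ℂ) (A := A))).subtype
        (B.toSubmodule ⊓ LinearMap.ker (Coalgebra.counit (R := ℂ) (A := A))).subtype))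

include hBcoalg hz in
lemma mulJ_key (b b' : ↥B) (m n : ℕ) :
    c.mulJ (((b : A) * z ^ m) ⊗ₜ[ℂ] ((b' : A) * z ^ n))
      - c.mulJ ((b : A) ⊗ₜ[ℂ] (b' : A)) * z ^ (m + n) ∈ MMlow B z (m + n) := by
  set r := comul (R := ℂ) ((b : A) * z ^ m)
      - comul (R := ℂ) (b : A) * ((z ^ m) ⊗ₜ[ℂ] (1 : A)) with hr_def
  set r' := comul (R := ℂ) ((b' : A) * z ^ n)
      - comul (R := ℂ) (b' : A) * ((z ^ n) ⊗ₜ[ℂ] (1 : A)) with hr'_def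
  have hr : r ∈ TTlow B z m := comul_bz B z hBcoalg hz b m
  have hr' : r' ∈ TTlow B z n := comul_bz B z hBcoalg hz b' n
  have hmainb : comul (R := ℂ) (b : A) * ((z ^ m) ⊗ₜ[ℂ] (1 : A)) ∈ TT B z m 0 := by
    have := mul_mem_TT B z (comul_mem_TT00 B z hBcoalg b.2)
      (tmul_mem_TT B z (zpow_mem_MM B z (le_refl m)) (one_mem_MM B z 0))
    simpa using this
  have hmainb' : comul (R := ℂ) (b' : A) * ((z ^ n) ⊗ₜ[ℂ] (1 : A)) ∈ TT B z n 0 := by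
    have := mul_mem_TT B z (comul_mem_TT00 B z hBcoalg b'.2)
      (tmul_mem_TT B z (zpow_mem_MM B z (le_refl n)) (one_mem_MM B z 0))
    simpa using this
  have hx : comul (R := ℂ) ((b : A) * z ^ m)
      = comul (R := ℂ) (b : A) * ((z ^ m) ⊗ₜ[ℂ] (1 : A)) + r := by rw [hr_def]; ring
  have hy : comul (R := ℂ) ((b' : A) * z ^ n)
      = comul (R := ℂ) (b' : A) * ((z ^ n) ⊗ₜ[ℂ] (1 : A)) + r' := by rw [hr'_def]; ring
  have expand : c.mulJ (((b : A) * z ^ m) ⊗ₜ[ℂ] ((b' : A) * z ^ n))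
      = Phi c ((comul (R := ℂ) (b : A) * ((z ^ m) ⊗ₜ[ℂ] (1 : A))) ⊗ₜ[ℂ]
          (comul (R := ℂ) (b' : A) * ((z ^ n) ⊗ₜ[ℂ] (1 : A))))
        + Phi c ((comul (R := ℂ) (b : A) * ((z ^ m) ⊗ₜ[ℂ] (1 : A))) ⊗ₜ[ℂ] r')
        + Phi c (r ⊗ₜ[ℂ] (comul (R := ℂ) (b' : A) * ((z ^ n) ⊗ₜ[ℂ] (1 : A))))
        + Phi c (r ⊗ₜ[ℂ] r') := by
    rw [mulJ_tmul, hx, hy, TensorProduct.add_tmul, TensorProduct.tmul_add,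
      TensorProduct.tmul_add, map_add, map_add, map_add]
    ring
  have hmain : Phi c ((comul (R := ℂ) (b : A) * ((z ^ m) ⊗ₜ[ℂ] (1 : A))) ⊗ₜ[ℂ]
      (comul (R := ℂ) (b' : A) * ((z ^ n) ⊗ₜ[ℂ] (1 : A))))
      = c.mulJ ((b : A) ⊗ₜ[ℂ] (b' : A)) * z ^ (m + n) := by
    rw [Phi_mul_z, mulJ_tmul]
  have goal_eq : c.mulJ (((b : A) * z ^ m) ⊗ₜ[ℂ] ((b' : A) * z ^ n))
      - c.mulJ ((b : A) ⊗ₜ[ℂ] (b' : A)) * z ^ (m + n)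
      = Phi c ((comul (R := ℂ) (b : A) * ((z ^ m) ⊗ₜ[ℂ] (1 : A))) ⊗ₜ[ℂ] r')
        + Phi c (r ⊗ₜ[ℂ] (comul (R := ℂ) (b' : A) * ((z ^ n) ⊗ₜ[ℂ] (1 : A))))
        + Phi c (r ⊗ₜ[ℂ] r') := by
    rw [expand, hmain]
    ring
  rw [goal_eq]
  refine Submodule.add_mem _ (Submodule.add_mem _ ?_ ?_) ?_
  · exact Phi_low_right B z c hmainb hr'
  · have := Phi_low_left B z c hr hmainb'
    exact MMlow_mono B z (by omega) this
  · have := Phi_low_left B z c hr (TTlow_le B z n hr')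
    exact MMlow_mono B z (by omega) this

end KeyLemma
end Aux6
section Aux7
open Coalgebra TensorProduct

variable {A : Type*} [CommRing A] [HopfAlgebra ℂ A]
variable (B : Subalgebra ℂ A) (z : A) (c : Hopf2Cocycle A)
variable (hBcoalg : ∀ x ∈ B, Coalgebra.comul (R := ℂ) x ∈
      LinearMap.range (TensorProduct.map B.toSubmodule.subtype B.toSubmodule.subtype))
variable (hz : Coalgebra.comul (R := ℂ) z - z ⊗ₜ[ℂ] (1 : A) - (1 : A) ⊗ₜ[ℂ] z ∈
      LinearMap.range (TensorProduct.map
        (B.toSubmodule ⊓ LinearMap.ker (Coalgebra.counit (R := ℂ) (A := A))).subtype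
        (B.toSubmodule ⊓ LinearMap.ker (Coalgebra.counit (R := ℂ) (A := A))).subtype))

include hBcoalg hz in
lemma mulJ_MM {m n : ℕ} {x y : A} (hx : x ∈ MM B z m) (hy : y ∈ MM B z n) :
    c.mulJ (x ⊗ₜ[ℂ] y) ∈ MM B z (m + n) := by
  rw [mulJ_tmul]
  exact Phi_TT B z c (comul_MM B z hBcoalg hz hx) (comul_MM B z hBcoalg hz hy)

include hBcoalg hz in
lemma mulJ_low_right {m n : ℕ} {x y : A} (hx : x ∈ MM B z m) (hy : y ∈ MMlow B z n) :
    c.mulJ (x ⊗ₜ[ℂ] y) ∈ MMlow B z (m + n) := by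
  cases n with
  | zero =>
    have : y = 0 := hy
    simp only [this, TensorProduct.tmul_zero, map_zero]
    exact Submodule.zero_mem _
  | succ k =>
    have := mulJ_MM B z c hBcoalg hz hx (hy : y ∈ MM B z k)
    have heq : m + (k + 1) = (m + k) + 1 := by omega
    rw [heq]
    exact this

include hBcoalg hz in
lemma zpowJ_sub (n : ℕ) : c.zpowJ z n - z ^ n ∈ MMlow B z n := by
  induction n with
  | zero =>
    show (1 : A) - z ^ 0 ∈ (⊥ : Submodule ℂ A)
    rw [pow_zero, sub_self]
    exact Submodule.zero_mem _
  | succ n ih =>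
    have hz1 : c.mulJ (z ⊗ₜ[ℂ] (z ^ n)) - z ^ (n + 1) ∈ MMlow B z (n + 1) := by
      have key := mulJ_key B z c hBcoalg hz 1 1 1 n
      simp only [OneMemClass.coe_one, one_mul, pow_one] at key
      rw [mulJ_one_left] at key
      have : (1 : ℕ) + n = n + 1 := by omega
      rwa [this, one_mul] at key
    have hz2 : c.mulJ (z ⊗ₜ[ℂ] (c.zpowJ z n - z ^ n)) ∈ MMlow B z (n + 1) := by
      have := mulJ_low_right B z c hBcoalg hz (z_mem_MM B z le_rfl) ih
      have heq : (1 : ℕ) + n = n + 1 := by omega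
      rwa [heq] at this
    have expand : c.zpowJ z (n + 1) - z ^ (n + 1)
        = (c.mulJ (z ⊗ₜ[ℂ] (z ^ n)) - z ^ (n + 1))
          + c.mulJ (z ⊗ₜ[ℂ] (c.zpowJ z n - z ^ n)) := by
      show c.mulJ (z ⊗ₜ[ℂ] c.zpowJ z n) - z ^ (n + 1) = _
      rw [TensorProduct.tmul_sub, map_sub]
      ring
    rw [expand]
    exact Submodule.add_mem _ hz1 hz2

include hBcoalg hz in
lemma mulJ_zpowJ_sub (k : ℕ) (b : ↥B) :
    c.mulJ ((b : A) ⊗ₜ[ℂ] c.zpowJ z k) - (b : A) * z ^ k ∈ MMlow B z k := by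
  have h1 : c.mulJ ((b : A) ⊗ₜ[ℂ] (z ^ k)) - (b : A) * z ^ k ∈ MMlow B z k := by
    have key := mulJ_key B z c hBcoalg hz b 1 0 k
    simp only [OneMemClass.coe_one, one_mul, pow_zero, mul_one] at key
    rw [mulJ_one_right] at key
    have : (0 : ℕ) + k = k := by omega
    rwa [this] at key
  have h2 : c.mulJ ((b : A) ⊗ₜ[ℂ] (c.zpowJ z k - z ^ k)) ∈ MMlow B z k := by
    have := mulJ_low_right B z c hBcoalg hz (mem_MM_of_mem_B B z (n := 0) b.2)
      (zpowJ_sub B z c hBcoalg hz k)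
    have heq : (0 : ℕ) + k = k := by omega
    rwa [heq] at this
  have expand : c.mulJ ((b : A) ⊗ₜ[ℂ] c.zpowJ z k) - (b : A) * z ^ k
      = (c.mulJ ((b : A) ⊗ₜ[ℂ] (z ^ k)) - (b : A) * z ^ k)
        + c.mulJ ((b : A) ⊗ₜ[ℂ] (c.zpowJ z k - z ^ k)) := by
    rw [TensorProduct.tmul_sub, map_sub]
    ring
  rw [expand]
  exact Submodule.add_mem _ h1 h2

/-- The linear version of the Ore-basis map. -/
def Tlin : (ℕ →₀ ↥B) →ₗ[ℂ] A :=
  Finsupp.lsum ℂ fun n =>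
    c.mulJ ∘ₗ ((TensorProduct.mk ℂ A A).flip (c.zpowJ z n)) ∘ₗ B.toSubmodule.subtype

lemma Tlin_apply (f : ℕ →₀ ↥B) :
    Tlin B z c f = ∑ n ∈ f.support, c.mulJ ((f n : A) ⊗ₜ[ℂ] c.zpowJ z n) := by
  rw [Tlin, Finsupp.lsum_apply]
  rfl

lemma Tlin_eq_sum (f : ℕ →₀ ↥B) :
    (f.sum fun n b => c.mulJ ((b : A) ⊗ₜ[ℂ] c.zpowJ z n)) = Tlin B z c f := by
  rw [Tlin_apply]
  rfl

include hBcoalg hz in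
lemma Tlin_sub_gmap {n : ℕ} {f : ℕ →₀ ↥B}
    (hf : (f.support : Set ℕ) ⊆ ↑(Finset.range (n + 1))) :
    Tlin B z c f - gmap B z f ∈ MMlow B z n := by
  rw [Tlin_apply, gmap_apply, ← Finset.sum_sub_distrib]
  refine Submodule.sum_mem _ fun k hk => ?_
  have hk' : k ≤ n := by
    have := hf hk; simp only [Finset.coe_range, Set.mem_Iio] at this; omega
  exact MMlow_mono B z hk' (mulJ_zpowJ_sub B z c hBcoalg hz k (f k))

end Aux7

/-- Let `A` be a commutative Hopf `ℂ`-algebra, `J` a Hopf 2-cocycle for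
`A`, `B ⊆ A` a Hopf subalgebra and `z ∈ A` with `Δ(z) - z ⊗ 1 - 1 ⊗ z ∈ B⁺ ⊗ B⁺` and
`A = B[z]` a polynomial ring over `B`.  Then (1) `B` is a subalgebra of `A_J`; (2) `A_J` is
generated by `B ∪ {z}`; (3) `z ·_J b - b ·_J z ∈ B` for all `b ∈ B`; consequently
`δ(b) = z ·_J b - b ·_J z` is a derivation of `B_J` and `A_J` is the Ore extension
`B_J[z; δ]` (i.e. a free left `B_J`-module on the `·_J`-powers of `z`, with the
commutation rule (3)). -/
theorem statement14 (A : Type*) [CommRing A] [HopfAlgebra ℂ A] (c : Hopf2Cocycle A)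
    (B : Subalgebra ℂ A)
    (hBcoalg : ∀ x ∈ B, Coalgebra.comul (R := ℂ) x ∈
      LinearMap.range (TensorProduct.map B.toSubmodule.subtype B.toSubmodule.subtype))
    (hBantipode : ∀ x ∈ B, HopfAlgebra.antipode (R := ℂ) x ∈ B)
    (z : A)
    (hz : Coalgebra.comul (R := ℂ) z - z ⊗ₜ[ℂ] (1 : A) - (1 : A) ⊗ₜ[ℂ] z ∈
      LinearMap.range (TensorProduct.map
        (B.toSubmodule ⊓ LinearMap.ker (Coalgebra.counit (R := ℂ) (A := A))).subtype
        (B.toSubmodule ⊓ LinearMap.ker (Coalgebra.counit (R := ℂ) (A := A))).subtype))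
    (hpoly : Function.Bijective
      (fun p : Polynomial ↥B => (Polynomial.aeval z p : A))) :
    (∀ x ∈ B, ∀ y ∈ B, c.mulJ (x ⊗ₜ[ℂ] y) ∈ B) ∧
    (∀ P : Submodule ℂ A, (B : Set A) ⊆ (P : Set A) → z ∈ P →
      (∀ x ∈ P, ∀ y ∈ P, c.mulJ (x ⊗ₜ[ℂ] y) ∈ P) → P = ⊤) ∧
    (∀ b ∈ B, c.mulJ (z ⊗ₜ[ℂ] b) - c.mulJ (b ⊗ₜ[ℂ] z) ∈ B) ∧
    (∀ b ∈ B, ∀ b' ∈ B,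
      c.mulJ (z ⊗ₜ[ℂ] c.mulJ (b ⊗ₜ[ℂ] b')) - c.mulJ (c.mulJ (b ⊗ₜ[ℂ] b') ⊗ₜ[ℂ] z)
        = c.mulJ ((c.mulJ (z ⊗ₜ[ℂ] b) - c.mulJ (b ⊗ₜ[ℂ] z)) ⊗ₜ[ℂ] b')
          + c.mulJ (b ⊗ₜ[ℂ] (c.mulJ (z ⊗ₜ[ℂ] b') - c.mulJ (b' ⊗ₜ[ℂ] z)))) ∧
    Function.Bijective (fun f : ℕ →₀ ↥B =>
      f.sum fun n b => c.mulJ ((b : A) ⊗ₜ[ℂ] c.zpowJ z n)) := by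
  refine ⟨?_, ?_, ?_, ?_, ?_⟩
  · -- (1)
    intro x hx y hy
    have := mulJ_MM B z c hBcoalg hz (m := 0) (n := 0)
      (mem_MM_of_mem_B B z hx) (mem_MM_of_mem_B B z hy)
    exact MM_zero_le B z this
  · -- (2)
    intro P hBP hzP hPc
    have hMM : ∀ n : ℕ, MM B z n ≤ P := by
      intro n
      induction n with
      | zero => exact fun a ha => hBP (MM_zero_le B z ha)
      | succ n ih =>
        rintro _ ⟨f, hf, rfl⟩
        rw [gmap_apply]
        refine Submodule.sum_mem _ fun k hk => ?_
        have hk' : k ≤ n + 1 := by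
          have := (Finsupp.mem_supported _ _).1 hf hk
          simp only [Finset.coe_range, Set.mem_Iio] at this; omega
        by_cases hkn : k ≤ n
        · exact ih (mul_zpow_mem_MM B z hkn (f k))
        · have hk1 : k = n + 1 := by omega
          subst hk1
          set b : ↥B := f (n + 1) with hb
          have h1 : c.mulJ (z ⊗ₜ[ℂ] ((b : A) * z ^ n)) ∈ P :=
            hPc z hzP _ (ih (mul_zpow_mem_MM B z le_rfl b))
          have key := mulJ_key B z c hBcoalg hz 1 b 1 n
          simp only [OneMemClass.coe_one, one_mul, pow_one] at key
          rw [mulJ_one_left] at key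
          rw [show (1 : ℕ) + n = n + 1 from by omega] at key
          have key' : c.mulJ (z ⊗ₜ[ℂ] ((b : A) * z ^ n)) - (b : A) * z ^ (n + 1) ∈ P :=
            ih key
          have heq : (b : A) * z ^ (n + 1)
              = c.mulJ (z ⊗ₜ[ℂ] ((b : A) * z ^ n))
                - (c.mulJ (z ⊗ₜ[ℂ] ((b : A) * z ^ n)) - (b : A) * z ^ (n + 1)) := by ring
          rw [heq]
          exact Submodule.sub_mem _ h1 key'
    rw [eq_top_iff]
    intro a _
    obtain ⟨n, hn⟩ := exists_MM B z hpoly.2 a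
    exact hMM n hn
  · -- (3)
    intro b hb
    have key1 := mulJ_key B z c hBcoalg hz 1 ⟨b, hb⟩ 1 0
    have key2 := mulJ_key B z c hBcoalg hz ⟨b, hb⟩ 1 0 1
    simp only [OneMemClass.coe_one, one_mul, pow_one, pow_zero, mul_one] at key1 key2
    rw [mulJ_one_left] at key1
    rw [mulJ_one_right] at key2
    have heq : c.mulJ (z ⊗ₜ[ℂ] b) - c.mulJ (b ⊗ₜ[ℂ] z)
        = (c.mulJ (z ⊗ₜ[ℂ] b) - b * z ^ (1 + 0))
          - (c.mulJ (b ⊗ₜ[ℂ] z) - b * z ^ (0 + 1)) := by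
      norm_num
    rw [heq]
    exact B.toSubmodule.sub_mem (MM_zero_le B z key1) (MM_zero_le B z key2)
  · -- (4)
    intro b _ b' _
    rw [TensorProduct.sub_tmul, map_sub, TensorProduct.tmul_sub, map_sub]
    linear_combination (mulJ_assoc c b z b') - (mulJ_assoc c z b b')
      - (mulJ_assoc c b b' z)
  · -- (5)
    have hfun : (fun f : ℕ →₀ ↥B => f.sum fun n b => c.mulJ ((b : A) ⊗ₜ[ℂ] c.zpowJ z n))
        = Tlin B z c := funext (Tlin_eq_sum B z c)
    rw [hfun]
    have hker : ∀ h : ℕ →₀ ↥B, Tlin B z c h = 0 → h = 0 := by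
      intro h h0
      by_contra hne
      have hsupp : h.support.Nonempty := Finsupp.support_nonempty_iff.2 hne
      set n := h.support.max' hsupp with hn
      have hsub : (h.support : Set ℕ) ⊆ ↑(Finset.range (n + 1)) := by
        intro x hx
        simp only [Finset.coe_range, Set.mem_Iio]
        have := Finset.le_max' h.support x hx
        omega
      have h1 := Tlin_sub_gmap B z c hBcoalg hz hsub
      rw [h0, zero_sub] at h1
      have h2 : gmap B z h ∈ MMlow B z n := by
        simpa using Submodule.neg_mem _ h1
      have hmem : n ∈ h.support := h.support.max'_mem hsupp
      cases hcase : n with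
      | zero =>
        rw [hcase] at h2
        have hg0 : gmap B z h = 0 := h2
        have : h = 0 := gmap_injective B z hpoly.1 (by rw [hg0, map_zero])
        exact hne this
      | succ m =>
        rw [hcase] at h2
        obtain ⟨f', hf', hval⟩ := (mem_MM_iff B z).1 h2
        have hfh : f' = h := gmap_injective B z hpoly.1 hval
        subst hfh
        have := hf' hmem
        simp only [Finset.coe_range, Set.mem_Iio] at this
        omega
    constructor
    · intro f g hfg
      have h0 : Tlin B z c (f - g) = 0 := by rw [map_sub, hfg, sub_self]
      have := hker _ h0
      exact sub_eq_zero.mp this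
    · have hM : ∀ n : ℕ, MM B z n ≤ LinearMap.range (Tlin B z c) := by
        intro n
        induction n with
        | zero =>
          rintro _ ⟨f, hf, rfl⟩
          have h1 := Tlin_sub_gmap B z c hBcoalg hz ((Finsupp.mem_supported _ _).1 hf)
          have h10 : Tlin B z c f - gmap B z f = 0 := h1
          exact ⟨f, by rw [← sub_eq_zero]; exact h10⟩
        | succ n ih =>
          rintro _ ⟨f, hf, rfl⟩
          have h1 := Tlin_sub_gmap B z c hBcoalg hz ((Finsupp.mem_supported _ _).1 hf)
          obtain ⟨g, hg⟩ := ih h1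
          refine ⟨f - g, ?_⟩
          rw [map_sub, hg]
          ring
      intro a
      obtain ⟨n, hn⟩ := exists_MM B z hpoly.2 a
      exact hM n hn

end Twisting
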